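/- arXiv:0801.4099 — 2 statements merged into one kernel-verified Lean document; each statement's English description precedes it below -/
import Mathlib

section
/- Let (𝒜, {·,·}) be a Poisson algebra over R and let D_𝒜 be the 𝒜-module of Kähler differentials of 𝒜. Then the formula [a du, b dv] = a{u,b} dv + b{a,v} du + ab d{u,v} defines an R-bilinear Lie bracket on D_𝒜, and together with the map π^♯: D_𝒜 → Der(𝒜) determined by π^♯(du)(v) = {u,v}, the pair (𝒜, D_𝒜) is a Lie-Rinehart algebra. -/
namespace KLRAux

noncomputable section
set_option maxHeartbeats 1600000


variable (R 𝒜 : Type) [CommRing R] [CommRing 𝒜] [Algebra R 𝒜]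

local notation "dd" => KaehlerDifferential.D R 𝒜

/-- Generator induction for Kähler differentials. -/
theorem kd_induction (p : Ω[𝒜⁄R] → Prop) (h0 : p 0)
    (hg : ∀ (a u : 𝒜), p (a • dd u))
    (hadd : ∀ x y, p x → p y → p (x + y)) : ∀ ω, p ω := by
  have key : ∀ ω ∈ Submodule.span 𝒜 (Set.range (dd)), ∀ a : 𝒜, p (a • ω) := by
    intro ω hω
    refine Submodule.span_induction ?_ ?_ ?_ ?_ hω
    · rintro _ ⟨u, rfl⟩ a; exact hg a u
    · intro a; simpa using h0
    · intro x y _ _ hx hy a; rw [smul_add]; exact hadd _ _ (hx a) (hy a)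
    · intro b x _ hx a; rw [smul_smul]; exact hx (a * b)
  intro ω
  have hω : ω ∈ Submodule.span 𝒜 (Set.range (dd)) := by
    rw [KaehlerDifferential.span_range_derivation]; trivial
  simpa using key ω hω 1


variable {R 𝒜}

/-- Square-zero twisted module used to construct the Lie derivative on `Ω`. -/
def TwM (_X : Derivation R 𝒜 𝒜) : Type := Ω[𝒜⁄R] × Ω[𝒜⁄R]

namespace TwM

variable (X : Derivation R 𝒜 𝒜)

instance : AddCommGroup (TwM X) := inferInstanceAs (AddCommGroup (Ω[𝒜⁄R] × Ω[𝒜⁄R]))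
instance : Module R (TwM X) := inferInstanceAs (Module R (Ω[𝒜⁄R] × Ω[𝒜⁄R]))

def mk' (x y : Ω[𝒜⁄R]) : TwM X := (x, y)
def p1 (m : TwM X) : Ω[𝒜⁄R] := (show Ω[𝒜⁄R] × Ω[𝒜⁄R] from m).1
def p2 (m : TwM X) : Ω[𝒜⁄R] := (show Ω[𝒜⁄R] × Ω[𝒜⁄R] from m).2

@[simp] lemma p1_mk' (x y : Ω[𝒜⁄R]) : p1 X (mk' X x y) = x := rfl
@[simp] lemma p2_mk' (x y : Ω[𝒜⁄R]) : p2 X (mk' X x y) = y := rfl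
@[simp] lemma p1_add (m n : TwM X) : p1 X (m + n) = p1 X m + p1 X n := rfl
@[simp] lemma p2_add (m n : TwM X) : p2 X (m + n) = p2 X m + p2 X n := rfl
@[simp] lemma p1_zero : p1 X (0 : TwM X) = 0 := rfl
@[simp] lemma p2_zero : p2 X (0 : TwM X) = 0 := rfl
@[simp] lemma p1_rsmul (r : R) (m : TwM X) : p1 X (r • m) = r • p1 X m := rfl
@[simp] lemma p2_rsmul (r : R) (m : TwM X) : p2 X (r • m) = r • p2 X m := rfl

lemma ext' {m n : TwM X} (h1 : p1 X m = p1 X n) (h2 : p2 X m = p2 X n) : m = n := by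
  exact Prod.ext (α := Ω[𝒜⁄R]) (β := Ω[𝒜⁄R]) (x := m) (y := n) h1 h2

instance : SMul 𝒜 (TwM X) := ⟨fun a m => mk' X (a • p1 X m) (a • p2 X m + X a • p1 X m)⟩

@[simp] lemma p1_smul (a : 𝒜) (m : TwM X) : p1 X (a • m) = a • p1 X m := rfl
@[simp] lemma p2_smul (a : 𝒜) (m : TwM X) : p2 X (a • m) = a • p2 X m + X a • p1 X m := rfl

instance : Module 𝒜 (TwM X) where
  one_smul m := ext' X (by rw [p1_smul, one_smul]) (by
    rw [p2_smul, one_smul, X.map_one_eq_zero, zero_smul, add_zero])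
  mul_smul a b m := ext' X (by rw [p1_smul, p1_smul, p1_smul, mul_smul]) (by
    rw [p2_smul, p2_smul, p2_smul, p1_smul, X.leibniz]
    simp only [smul_eq_mul]
    module)
  smul_zero a := ext' X (by rw [p1_smul, p1_zero, smul_zero]) (by
    rw [p2_smul, p2_zero, p1_zero, smul_zero, smul_zero, add_zero])
  smul_add a m n := ext' X (by rw [p1_smul, p1_add, p1_add, p1_smul, p1_smul, smul_add]) (by
    rw [p2_smul, p2_add, p2_add, p1_add, p2_smul, p2_smul, smul_add, smul_add]
    abel)
  add_smul a b m := ext' X (by rw [p1_add, p1_smul, p1_smul, p1_smul, add_smul]) (by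
    rw [p2_add, p2_smul, p2_smul, p2_smul, X.map_add, add_smul, add_smul]
    abel)
  zero_smul m := ext' X (by rw [p1_smul, zero_smul, p1_zero]) (by
    rw [p2_smul, zero_smul, map_zero, zero_smul, add_zero, p2_zero])

instance : IsScalarTower R 𝒜 (TwM X) where
  smul_assoc r a m := ext' X (by rw [p1_smul, p1_rsmul, p1_smul, smul_assoc]) (by
    rw [p2_smul, p2_rsmul, p2_smul, X.map_smul, smul_assoc, smul_assoc]
    exact (smul_add r (a • p2 X m) (X a • p1 X m)).symm)

/-- First projection as an `𝒜`-linear map. -/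
def p1lin : TwM X →ₗ[𝒜] Ω[𝒜⁄R] where
  toFun := p1 X
  map_add' _ _ := rfl
  map_smul' _ _ := rfl

/-- Second projection as an `R`-linear map. -/
def p2lin : TwM X →ₗ[R] Ω[𝒜⁄R] where
  toFun := p2 X
  map_add' _ _ := rfl
  map_smul' _ _ := rfl

/-- The tautological derivation into the twisted module. -/
def delta : Derivation R 𝒜 (TwM X) where
  toFun u := mk' X (dd u) (dd (X u))
  map_add' u v := by apply ext' <;> simp
  map_smul' r u := by apply ext' <;> simp
  map_one_eq_zero' := by apply ext' <;> simp
  leibniz' a b := by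
    apply ext'
    · simp [(KaehlerDifferential.D R 𝒜).leibniz]
    · simp [X.leibniz, (KaehlerDifferential.D R 𝒜).leibniz, smul_add]
      module

end TwM

variable (X Y : Derivation R 𝒜 𝒜)

/-- The lift of `delta`. -/
def ell : Ω[𝒜⁄R] →ₗ[𝒜] TwM X := (TwM.delta X).liftKaehlerDifferential

@[simp] lemma ell_D (u : 𝒜) : ell X (dd u) = TwM.mk' X (dd u) (dd (X u)) :=
  Derivation.liftKaehlerDifferential_comp_D _ _

lemma p1_ell (ω : Ω[𝒜⁄R]) : TwM.p1 X (ell X ω) = ω := by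
  have : (TwM.p1lin X).comp (ell X) = LinearMap.id := by
    apply Derivation.liftKaehlerDifferential_unique
    ext u
    simp [TwM.p1lin, ell_D]
    rfl
  exact congrArg (fun f => f ω) this

/-- The Lie derivative on `Ω[𝒜⁄R]` along a derivation `X`. -/
def LD : Ω[𝒜⁄R] →ₗ[R] Ω[𝒜⁄R] := (TwM.p2lin X).comp ((ell X).restrictScalars R)

@[simp] lemma LD_D (u : 𝒜) : LD X (dd u) = dd (X u) := by
  simp [LD, TwM.p2lin, ell_D]
  rfl

lemma LD_smul (a : 𝒜) (ω : Ω[𝒜⁄R]) : LD X (a • ω) = a • LD X ω + X a • ω := by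
  have : ell X (a • ω) = a • ell X ω := map_smul _ _ _
  simp only [LD, LinearMap.comp_apply, LinearMap.restrictScalars_apply, this]
  show TwM.p2 X (a • ell X ω) = _
  rw [TwM.p2_smul, p1_ell]
  rfl

lemma LD_gen (a u : 𝒜) : LD X (a • dd u) = a • dd (X u) + X a • dd u := by
  rw [LD_smul, LD_D]


/-- Contraction with a derivation. -/
def iot : Ω[𝒜⁄R] →ₗ[𝒜] 𝒜 := X.liftKaehlerDifferential

@[simp] lemma iot_D (u : 𝒜) : iot X (dd u) = X u :=
  Derivation.liftKaehlerDifferential_comp_D _ _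

lemma iot_gen (a u : 𝒜) : iot X (a • dd u) = a * X u := by
  rw [map_smul, iot_D, smul_eq_mul]

lemma iot_add_X (ω : Ω[𝒜⁄R]) : iot (X + Y) ω = iot X ω + iot Y ω := by
  induction ω using kd_induction R 𝒜 with
  | h0 => simp
  | hg a u => simp [iot_gen, mul_add]
  | hadd x y hx hy => simp [hx, hy]; ring

lemma iot_smulA_X (a : 𝒜) (ω : Ω[𝒜⁄R]) : iot (a • X) ω = a * iot X ω := by
  induction ω using kd_induction R 𝒜 with
  | h0 => simp
  | hg b u => simp [iot_gen]; ring
  | hadd x y hx hy => simp [hx, hy]; ring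

lemma LD_add_X (ω : Ω[𝒜⁄R]) : LD (X + Y) ω = LD X ω + LD Y ω := by
  induction ω using kd_induction R 𝒜 with
  | h0 => simp
  | hg a u => simp only [LD_gen, Derivation.add_apply, map_add, smul_add, add_smul]; abel
  | hadd x y hx hy => simp [hx, hy]; abel

lemma LD_smulA_X (a : 𝒜) (ω : Ω[𝒜⁄R]) :
    LD (a • X) ω = a • LD X ω + iot X ω • dd a := by
  induction ω using kd_induction R 𝒜 with
  | h0 => simp
  | hg b u =>
      rw [LD_gen, Derivation.smul_apply, Derivation.smul_apply, iot_gen, LD_gen,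
        smul_eq_mul, smul_eq_mul, (KaehlerDifferential.D R 𝒜).leibniz]
      module
  | hadd x y hx hy =>
      rw [map_add, hx, hy, map_add, map_add, smul_add, add_smul]
      abel


section Poisson

variable (P : 𝒜 →ₗ[R] 𝒜 →ₗ[R] 𝒜)

/-- `P u` as a derivation. -/
def pd (hleib : ∀ u v w : 𝒜, P u (v * w) = P u v * w + v * P u w) (u : 𝒜) :
    Derivation R 𝒜 𝒜 where
  toLinearMap := P u
  map_one_eq_zero' := by
    have h := hleib u 1 1
    rw [one_mul] at h
    have h2 : P u 1 + P u 1 = P u 1 + 0 := by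
      rw [add_zero]
      have := h.symm
      rw [mul_one, one_mul] at this
      exact this
    exact add_left_cancel h2
  leibniz' a b := by
    show P u (a * b) = _
    rw [hleib u a b]; simp only [smul_eq_mul]; ring


variable (hanti : ∀ u v : 𝒜, P u v = - P v u)
variable (hleib : ∀ u v w : 𝒜, P u (v * w) = P u v * w + v * P u w)

@[simp] lemma pd_apply (u v : 𝒜)
    (hleib : ∀ u v w : 𝒜, P u (v * w) = P u v * w + v * P u w) :
    pd P hleib u v = P u v := rfl

/-- The Hamiltonian construction as a derivation with values in derivations. -/
def Dp : Derivation R 𝒜 (Derivation R 𝒜 𝒜) where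
  toFun u := pd P hleib u
  map_add' u v := by
    ext w
    show P (u + v) w = P u w + P v w
    rw [map_add, LinearMap.add_apply]
  map_smul' r u := by
    ext w
    show P (r • u) w = r • P u w
    rw [map_smul, LinearMap.smul_apply]
  map_one_eq_zero' := by
    ext w
    show P 1 w = 0
    have h1 : P w 1 = 0 := (pd P hleib w).map_one_eq_zero
    rw [hanti 1 w, h1, neg_zero]
  leibniz' a b := by
    ext w
    show P (a * b) w = (a • pd P hleib b + b • pd P hleib a) w
    rw [Derivation.add_apply, Derivation.smul_apply, Derivation.smul_apply,
      pd_apply, pd_apply]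
    simp only [smul_eq_mul]
    linear_combination hanti (a*b) w - hleib w a b - b * hanti a w - a * hanti b w

/-- The anchor map `π^♯`. -/
def shp : Ω[𝒜⁄R] →ₗ[𝒜] Derivation R 𝒜 𝒜 :=
  (Dp P hanti hleib).liftKaehlerDifferential

@[simp] lemma shp_D (u : 𝒜) : shp P hanti hleib (dd u) = pd P hleib u :=
  Derivation.liftKaehlerDifferential_comp_D _ _

lemma shp_gen (a u : 𝒜) : shp P hanti hleib (a • dd u) = a • pd P hleib u := by
  rw [map_smul, shp_D]


variable (hjac : ∀ u v w : 𝒜, P u (P v w) = P (P u v) w + P v (P u w))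

local notation "Sh" => shp P hanti hleib

/-- The Koszul bracket. -/
def Bk (ω η : Ω[𝒜⁄R]) : Ω[𝒜⁄R] :=
  LD (Sh ω) η - LD (Sh η) ω - dd (iot (Sh ω) η)

lemma Bk_def (ω η : Ω[𝒜⁄R]) :
    Bk P hanti hleib ω η = LD (Sh ω) η - LD (Sh η) ω - dd (iot (Sh ω) η) := rfl

local notation "Bq" => Bk P hanti hleib

lemma Bk_add_left (ω₁ ω₂ η : Ω[𝒜⁄R]) : Bq (ω₁ + ω₂) η = Bq ω₁ η + Bq ω₂ η := by
  rw [Bk_def, Bk_def, Bk_def, map_add, LD_add_X, map_add, iot_add_X, map_add]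
  abel

lemma Bk_add_right (ω η₁ η₂ : Ω[𝒜⁄R]) : Bq ω (η₁ + η₂) = Bq ω η₁ + Bq ω η₂ := by
  rw [Bk_def, Bk_def, Bk_def, map_add, map_add, LD_add_X, map_add, map_add]
  abel

lemma Bk_zero_left (η : Ω[𝒜⁄R]) : Bq 0 η = 0 := by
  have h := Bk_add_left P hanti hleib 0 0 η
  rw [add_zero] at h
  have h2 : Bq 0 η + 0 = Bq 0 η + Bq 0 η := by rw [add_zero]; exact h
  exact (add_left_cancel h2).symm

lemma Bk_zero_right (ω : Ω[𝒜⁄R]) : Bq ω 0 = 0 := by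
  have h := Bk_add_right P hanti hleib ω 0 0
  rw [add_zero] at h
  have h2 : Bq ω 0 + 0 = Bq ω 0 + Bq ω 0 := by rw [add_zero]; exact h
  exact (add_left_cancel h2).symm

lemma Bk_neg_left (ω η : Ω[𝒜⁄R]) : Bq (-ω) η = -Bq ω η := by
  have h := Bk_add_left P hanti hleib ω (-ω) η
  rw [add_neg_cancel, Bk_zero_left] at h
  exact (neg_eq_of_add_eq_zero_right h.symm).symm

lemma Bk_neg_right (ω η : Ω[𝒜⁄R]) : Bq ω (-η) = -Bq ω η := by
  have h := Bk_add_right P hanti hleib ω η (-η)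
  rw [add_neg_cancel, Bk_zero_right] at h
  exact (neg_eq_of_add_eq_zero_right h.symm).symm

lemma Bk_gen (a b u v : 𝒜) :
    Bq (a • dd u) (b • dd v) =
      (a * P u b) • dd v + (b * P a v) • dd u + (a * b) • dd (P u v) := by
  rw [Bk_def, shp_gen, shp_gen, LD_smulA_X, LD_smulA_X, iot_smulA_X, iot_gen, iot_gen,
    LD_gen, LD_gen]
  simp only [pd_apply]
  rw [(KaehlerDifferential.D R 𝒜).leibniz, (KaehlerDifferential.D R 𝒜).leibniz,
    hanti v u, hanti v a]
  simp only [map_neg, smul_neg, mul_neg, neg_smul]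
  module

lemma iot_zero_X (ω : Ω[𝒜⁄R]) : iot (0 : Derivation R 𝒜 𝒜) ω = 0 := by
  have h := iot_add_X (0 : Derivation R 𝒜 𝒜) 0 ω
  rw [add_zero] at h
  have h2 : iot (0 : Derivation R 𝒜 𝒜) ω + 0 = iot (0 : Derivation R 𝒜 𝒜) ω
      + iot (0 : Derivation R 𝒜 𝒜) ω := by rw [add_zero]; exact h
  exact (add_left_cancel h2).symm

lemma iot_shp_skew (ω η : Ω[𝒜⁄R]) : iot (Sh η) ω = - iot (Sh ω) η := by
  induction ω using kd_induction R 𝒜 with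
  | h0 => rw [map_zero, map_zero, iot_zero_X, neg_zero]
  | hg a u =>
      induction η using kd_induction R 𝒜 with
      | h0 => rw [map_zero, iot_zero_X, map_zero, neg_zero]
      | hg b v =>
          rw [shp_gen, shp_gen, iot_smulA_X, iot_smulA_X, iot_gen, iot_gen, pd_apply,
            pd_apply, hanti v u]
          ring
      | hadd x y hx hy =>
          rw [map_add, map_add, iot_add_X, hx, hy]
          abel
  | hadd x y hx hy =>
      rw [map_add, map_add, iot_add_X, hx, hy]
      abel

lemma Bk_smul_right (a : 𝒜) (ω η : Ω[𝒜⁄R]) :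
    Bq ω (a • η) = a • Bq ω η + (Sh ω a) • η := by
  rw [Bk_def, Bk_def, LinearMap.map_smul, LD_smul, LD_smulA_X, LinearMap.map_smul,
    smul_eq_mul, (KaehlerDifferential.D R 𝒜).leibniz, iot_shp_skew P hanti hleib ω η]
  module

lemma Bk_skew (ω η : Ω[𝒜⁄R]) : Bq ω η = - Bq η ω := by
  induction ω using kd_induction R 𝒜 with
  | h0 => rw [Bk_zero_left, Bk_zero_right, neg_zero]
  | hg a u =>
      induction η using kd_induction R 𝒜 with
      | h0 => rw [Bk_zero_left, Bk_zero_right, neg_zero]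
      | hg b v =>
          rw [Bk_gen, Bk_gen, hanti v a, hanti b u, hanti v u]
          simp only [map_neg, smul_neg, mul_neg, neg_smul]
          module
      | hadd x y hx hy =>
          rw [Bk_add_right, Bk_add_left, hx, hy, neg_add]
  | hadd x y hx hy =>
      rw [Bk_add_left, Bk_add_right, hx, hy, neg_add]

lemma Bk_smul_left (a : 𝒜) (ω η : Ω[𝒜⁄R]) :
    Bq (a • ω) η = a • Bq ω η - (Sh η a) • ω := by
  rw [Bk_skew P hanti hleib (a • ω) η, Bk_smul_right, Bk_skew P hanti hleib η ω]
  simp only [smul_neg, neg_add, neg_neg, sub_eq_add_neg]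

include hjac in
lemma shp_Bk (ω η : Ω[𝒜⁄R]) : Sh (Bq ω η) = ⁅Sh ω, Sh η⁆ := by
  induction ω using kd_induction R 𝒜 with
  | h0 => rw [Bk_zero_left, map_zero, zero_lie]
  | hg a u =>
      induction η using kd_induction R 𝒜 with
      | h0 => rw [Bk_zero_right, map_zero, lie_zero]
      | hg b v =>
          rw [Bk_gen, map_add, map_add, shp_gen, shp_gen, shp_gen, shp_gen, shp_gen]
          ext w
          simp only [Derivation.add_apply, Derivation.smul_apply,
            Derivation.commutator_apply, pd_apply, smul_eq_mul]
          linear_combination (-a) * hleib u b (P v w) + b * hleib v a (P u w)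
            + b * P u w * hanti a v - a * b * hjac u v w
      | hadd x y hx hy =>
          rw [Bk_add_right, map_add, map_add, hx, hy, lie_add]
  | hadd x y hx hy =>
      rw [Bk_add_left, map_add, map_add, hx, hy, add_lie]


include hleib in
lemma P_one_right (u : 𝒜) : P u 1 = 0 := (pd P hleib u).map_one_eq_zero

include hanti hleib in
lemma P_one_left (u : 𝒜) : P 1 u = 0 := by
  rw [hanti 1 u, P_one_right P hleib, neg_zero]

lemma Bk_D (u v : 𝒜) : Bq (dd u) (dd v) = dd (P u v) := by
  have h : Bq (dd u) (dd v) = Bq ((1 : 𝒜) • dd u) ((1 : 𝒜) • dd v) := by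
    rw [one_smul, one_smul]
  rw [h, Bk_gen, P_one_right P hleib, P_one_left P hanti hleib]
  simp

/-- The Jacobiator. -/
def Jk (ω η ζ : Ω[𝒜⁄R]) : Ω[𝒜⁄R] :=
  Bq ω (Bq η ζ) + Bq η (Bq ζ ω) + Bq ζ (Bq ω η)

lemma Jk_def (ω η ζ : Ω[𝒜⁄R]) :
    Jk P hanti hleib ω η ζ = Bq ω (Bq η ζ) + Bq η (Bq ζ ω) + Bq ζ (Bq ω η) := rfl

local notation "Jq" => Jk P hanti hleib

lemma Jk_cyc (ω η ζ : Ω[𝒜⁄R]) : Jq ω η ζ = Jq η ζ ω := by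
  rw [Jk_def, Jk_def]; abel

include hjac in
lemma Jk_smul3 (c : 𝒜) (ω η ζ : Ω[𝒜⁄R]) : Jq ω η (c • ζ) = c • Jq ω η ζ := by
  have t1 : Bq ω (Bq η (c • ζ)) = c • Bq ω (Bq η ζ) + Sh ω c • Bq η ζ
      + Sh η c • Bq ω ζ + Sh ω (Sh η c) • ζ := by
    rw [Bk_smul_right, Bk_add_right, Bk_smul_right, Bk_smul_right]
    abel
  have t2 : Bq η (Bq (c • ζ) ω) = c • Bq η (Bq ζ ω) + Sh η c • Bq ζ ω
      - Sh ω c • Bq η ζ - Sh η (Sh ω c) • ζ := by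
    rw [Bk_smul_left, sub_eq_add_neg, Bk_add_right, Bk_neg_right, Bk_smul_right,
      Bk_smul_right]
    abel
  have t3 : Bq (c • ζ) (Bq ω η) = c • Bq ζ (Bq ω η) - Sh ω (Sh η c) • ζ
      + Sh η (Sh ω c) • ζ := by
    rw [Bk_smul_left, shp_Bk P hanti hleib hjac, Derivation.commutator_apply, sub_smul]
    abel
  rw [Jk_def, Jk_def, t1, t2, t3, smul_add, smul_add, Bk_skew P hanti hleib ω ζ,
    smul_neg]
  abel

include hjac in
lemma Jk_smul1 (c : 𝒜) (ω η ζ : Ω[𝒜⁄R]) : Jq (c • ω) η ζ = c • Jq ω η ζ := by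
  rw [Jk_cyc P hanti hleib (c • ω) η ζ, Jk_smul3 P hanti hleib hjac,
    Jk_cyc P hanti hleib η ζ ω, Jk_cyc P hanti hleib ζ ω η]

include hjac in
lemma Jk_smul2 (c : 𝒜) (ω η ζ : Ω[𝒜⁄R]) : Jq ω (c • η) ζ = c • Jq ω η ζ := by
  rw [Jk_cyc P hanti hleib ω (c • η) ζ, Jk_smul1 P hanti hleib hjac,
    Jk_cyc P hanti hleib η ζ ω, Jk_cyc P hanti hleib ζ ω η]

lemma Jk_add3 (ω η ζ₁ ζ₂ : Ω[𝒜⁄R]) :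
    Jq ω η (ζ₁ + ζ₂) = Jq ω η ζ₁ + Jq ω η ζ₂ := by
  simp only [Jk_def, Bk_add_left, Bk_add_right]
  abel

lemma Jk_add1 (ω₁ ω₂ η ζ : Ω[𝒜⁄R]) :
    Jq (ω₁ + ω₂) η ζ = Jq ω₁ η ζ + Jq ω₂ η ζ := by
  rw [Jk_cyc P hanti hleib (ω₁ + ω₂) η ζ, Jk_add3,
    Jk_cyc P hanti hleib η ζ ω₁, Jk_cyc P hanti hleib ζ ω₁ η,
    Jk_cyc P hanti hleib η ζ ω₂, Jk_cyc P hanti hleib ζ ω₂ η]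

lemma Jk_add2 (ω η₁ η₂ ζ : Ω[𝒜⁄R]) :
    Jq ω (η₁ + η₂) ζ = Jq ω η₁ ζ + Jq ω η₂ ζ := by
  rw [Jk_cyc P hanti hleib ω (η₁ + η₂) ζ, Jk_add1,
    Jk_cyc P hanti hleib η₁ ζ ω, Jk_cyc P hanti hleib ζ ω η₁,
    Jk_cyc P hanti hleib η₂ ζ ω, Jk_cyc P hanti hleib ζ ω η₂]

lemma Jk_zero3 (ω η : Ω[𝒜⁄R]) : Jq ω η 0 = 0 := by
  rw [Jk_def, Bk_zero_right, Bk_zero_left, Bk_zero_right, Bk_zero_left, Bk_zero_right]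
  abel

lemma Jk_zero1 (η ζ : Ω[𝒜⁄R]) : Jq 0 η ζ = 0 := by
  rw [Jk_cyc P hanti hleib 0 η ζ, Jk_zero3]

lemma Jk_zero2 (ω ζ : Ω[𝒜⁄R]) : Jq ω 0 ζ = 0 := by
  rw [Jk_cyc P hanti hleib ω 0 ζ, Jk_zero1]

include hjac in
lemma Jk_D (u v w : 𝒜) : Jq (dd u) (dd v) (dd w) = 0 := by
  rw [Jk_def, Bk_D, Bk_D, Bk_D, Bk_D, Bk_D, Bk_D, ← map_add, ← map_add]
  have hz : P u (P v w) + P v (P w u) + P w (P u v) = 0 := by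
    rw [hanti w u, map_neg, hanti w (P u v)]
    linear_combination hjac u v w
  rw [hz, map_zero]

include hjac in
lemma Jk_all (ω η ζ : Ω[𝒜⁄R]) : Jq ω η ζ = 0 := by
  have S2 : ∀ (u v : 𝒜) (ζ : Ω[𝒜⁄R]), Jq (dd u) (dd v) ζ = 0 := by
    intro u v ζ
    induction ζ using kd_induction R 𝒜 with
    | h0 => exact Jk_zero3 P hanti hleib _ _
    | hg c w => rw [Jk_smul3 P hanti hleib hjac, Jk_D P hanti hleib hjac, smul_zero]
    | hadd x y hx hy => rw [Jk_add3, hx, hy, add_zero]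
  have S3 : ∀ (u : 𝒜) (η ζ : Ω[𝒜⁄R]), Jq (dd u) η ζ = 0 := by
    intro u η
    induction η using kd_induction R 𝒜 with
    | h0 => intro ζ; exact Jk_zero2 P hanti hleib _ _
    | hg b v => intro ζ; rw [Jk_smul2 P hanti hleib hjac, S2, smul_zero]
    | hadd x y hx hy => intro ζ; rw [Jk_add2, hx, hy, add_zero]
  induction ω using kd_induction R 𝒜 with
  | h0 => exact Jk_zero1 P hanti hleib _ _
  | hg a u => rw [Jk_smul1 P hanti hleib hjac, S3, smul_zero]
  | hadd x y hx hy => rw [Jk_add1, hx, hy, add_zero]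

include hjac in
lemma Bk_jacobi (ω η ζ : Ω[𝒜⁄R]) :
    Bq ω (Bq η ζ) = Bq (Bq ω η) ζ + Bq η (Bq ω ζ) := by
  have h := Jk_all P hanti hleib hjac ω η ζ
  rw [Jk_def] at h
  have h3 := eq_sub_of_add_eq (eq_neg_of_add_eq_zero_left h)
  rw [Bk_skew P hanti hleib (Bq ω η) ζ, Bk_skew P hanti hleib ω ζ, Bk_neg_right, h3]
  abel

end Poisson

end
end KLRAux

/-- For a Poisson algebra `(𝒜, {·,·})` over `R`, the formula
`[a du, b dv] = a{u,b} dv + b{a,v} du + ab d{u,v}` defines an `R`-bilinear Lie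
bracket on the module of Kähler differentials `Ω[𝒜⁄R]`, and together with the
anchor `π^♯` determined by `π^♯(du)(v) = {u,v}` the pair `(𝒜, Ω[𝒜⁄R])` becomes
a Lie–Rinehart algebra. -/
theorem kaehler_lieRinehart_of_poisson
    (R 𝒜 : Type) [CommRing R] [CommRing 𝒜] [Algebra R 𝒜]
    (P : 𝒜 →ₗ[R] 𝒜 →ₗ[R] 𝒜)
    (hanti : ∀ u v : 𝒜, P u v = - P v u)
    (hjac : ∀ u v w : 𝒜, P u (P v w) = P (P u v) w + P v (P u w))
    (hleib : ∀ u v w : 𝒜, P u (v * w) = P u v * w + v * P u w) :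
    ∃ (B : Ω[𝒜⁄R] → Ω[𝒜⁄R] → Ω[𝒜⁄R]) (sharp : Ω[𝒜⁄R] →ₗ[𝒜] Derivation R 𝒜 𝒜),
      -- `B` is `R`-bilinear:
      (∀ ω₁ ω₂ η : Ω[𝒜⁄R], B (ω₁ + ω₂) η = B ω₁ η + B ω₂ η) ∧
      (∀ ω η₁ η₂ : Ω[𝒜⁄R], B ω (η₁ + η₂) = B ω η₁ + B ω η₂) ∧
      (∀ (r : R) (ω η : Ω[𝒜⁄R]),
        B (algebraMap R 𝒜 r • ω) η = algebraMap R 𝒜 r • B ω η ∧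
        B ω (algebraMap R 𝒜 r • η) = algebraMap R 𝒜 r • B ω η) ∧
      -- `B` is a Lie bracket:
      (∀ ω η : Ω[𝒜⁄R], B ω η = - B η ω) ∧
      (∀ ω η ζ : Ω[𝒜⁄R], B ω (B η ζ) = B (B ω η) ζ + B η (B ω ζ)) ∧
      -- the anchor is determined by `π^♯(du)(v) = {u,v}`:
      (∀ u v : 𝒜, sharp (KaehlerDifferential.D R 𝒜 u) v = P u v) ∧
      -- the defining formula `[a du, b dv] = a{u,b} dv + b{a,v} du + ab d{u,v}`:
      (∀ a b u v : 𝒜,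
        B (a • KaehlerDifferential.D R 𝒜 u) (b • KaehlerDifferential.D R 𝒜 v) =
          (a * P u b) • KaehlerDifferential.D R 𝒜 v
            + (b * P a v) • KaehlerDifferential.D R 𝒜 u
            + (a * b) • KaehlerDifferential.D R 𝒜 (P u v)) ∧
      -- the Lie–Rinehart compatibility conditions:
      (∀ (a : 𝒜) (ω η : Ω[𝒜⁄R]), B ω (a • η) = a • B ω η + (sharp ω a) • η) ∧
      (∀ ω η : Ω[𝒜⁄R], sharp (B ω η) = ⁅sharp ω, sharp η⁆) := by
  refine ⟨KLRAux.Bk P hanti hleib, KLRAux.shp P hanti hleib, ?_, ?_, ?_, ?_, ?_, ?_, ?_, ?_, ?_⟩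
  · exact KLRAux.Bk_add_left P hanti hleib
  · exact KLRAux.Bk_add_right P hanti hleib
  · intro r ω η
    constructor
    · rw [KLRAux.Bk_skew P hanti hleib (algebraMap R 𝒜 r • ω) η,
        KLRAux.Bk_smul_right, Derivation.map_algebraMap, zero_smul, add_zero,
        KLRAux.Bk_skew P hanti hleib η ω, smul_neg, neg_neg]
    · rw [KLRAux.Bk_smul_right, Derivation.map_algebraMap, zero_smul, add_zero]
  · exact fun ω η => KLRAux.Bk_skew P hanti hleib ω η
  · exact fun ω η ζ => KLRAux.Bk_jacobi P hanti hleib hjac ω η ζ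
  · intro u v
    rw [KLRAux.shp_D]
    rfl
  · exact fun a b u v => KLRAux.Bk_gen P hanti hleib a b u v
  · exact fun a ω η => KLRAux.Bk_smul_right P hanti hleib a ω η
  · exact fun ω η => KLRAux.shp_Bk P hanti hleib hjac ω η
end

section
/- Let (𝒜,{·,·}) be a Poisson algebra over R, with Lie-Rinehart algebra (𝒜, D_𝒜) where D_𝒜 carries the bracket [a du, b dv] = a{u,b} dv + b{a,v} du + ab d{u,v} and anchor π^♯(du)(v)={u,v}. Then π^♯: D_𝒜 → Der(𝒜) is a morphism of Lie algebras, i.e., π^♯([ω,η]) = [π^♯(ω), π^♯(η)] for all ω,η ∈ D_𝒜. -/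
/-- For a Poisson algebra `(𝒜, {·,·})` over `R`, with the bracket
`[a du, b dv] = a{u,b} dv + b{a,v} du + ab d{u,v}` on `Ω[𝒜⁄R]` and the anchor `π^♯`
determined by `π^♯(du)(v) = {u,v}`, the anchor `π^♯ : Ω[𝒜⁄R] → Der(𝒜)` is a morphism
of Lie algebras: `π^♯([ω,η]) = [π^♯ ω, π^♯ η]`. -/
theorem kaehler_anchor_is_lie_morphism
    (R 𝒜 : Type) [CommRing R] [CommRing 𝒜] [Algebra R 𝒜]
    (P : 𝒜 →ₗ[R] 𝒜 →ₗ[R] 𝒜)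
    (hanti : ∀ u v : 𝒜, P u v = - P v u)
    (hjac : ∀ u v w : 𝒜, P u (P v w) = P (P u v) w + P v (P u w))
    (hleib : ∀ u v w : 𝒜, P u (v * w) = P u v * w + v * P u w)
    (B : Ω[𝒜⁄R] → Ω[𝒜⁄R] → Ω[𝒜⁄R])
    (hBadd₁ : ∀ ω₁ ω₂ η : Ω[𝒜⁄R], B (ω₁ + ω₂) η = B ω₁ η + B ω₂ η)
    (hBadd₂ : ∀ ω η₁ η₂ : Ω[𝒜⁄R], B ω (η₁ + η₂) = B ω η₁ + B ω η₂)
    (hBform : ∀ a b u v : 𝒜,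
      B (a • KaehlerDifferential.D R 𝒜 u) (b • KaehlerDifferential.D R 𝒜 v) =
        (a * P u b) • KaehlerDifferential.D R 𝒜 v
          + (b * P a v) • KaehlerDifferential.D R 𝒜 u
          + (a * b) • KaehlerDifferential.D R 𝒜 (P u v))
    (sharp : Ω[𝒜⁄R] →ₗ[𝒜] Derivation R 𝒜 𝒜)
    (hsharp : ∀ u v : 𝒜, sharp (KaehlerDifferential.D R 𝒜 u) v = P u v) :
    ∀ ω η : Ω[𝒜⁄R], sharp (B ω η) = ⁅sharp ω, sharp η⁆ := by
  set D := KaehlerDifferential.D R 𝒜 with hD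
  -- the set of "monomial" forms
  set S : Set (Ω[𝒜⁄R]) := {x | ∃ a u : 𝒜, x = a • D u} with hS
  -- its additive closure is everything
  have hzero : (0 : Ω[𝒜⁄R]) ∈ S := ⟨0, 0, by simp⟩
  have hsmul : ∀ (c : 𝒜) (x : Ω[𝒜⁄R]), x ∈ AddSubmonoid.closure S →
      c • x ∈ AddSubmonoid.closure S := by
    intro c x hx
    induction hx using AddSubmonoid.closure_induction with
    | mem y hy =>
      obtain ⟨a, u, rfl⟩ := hy
      exact AddSubmonoid.subset_closure ⟨c * a, u, (mul_smul c a (D u)).symm⟩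
    | zero => simpa using AddSubmonoid.subset_closure hzero
    | add y z _ _ hy hz => rw [smul_add]; exact AddSubmonoid.add_mem _ hy hz
  have htop : ∀ x : Ω[𝒜⁄R], x ∈ AddSubmonoid.closure S := by
    intro x
    let M : Submodule 𝒜 (Ω[𝒜⁄R]) :=
      { carrier := AddSubmonoid.closure S
        add_mem' := fun h1 h2 => AddSubmonoid.add_mem _ h1 h2
        zero_mem' := AddSubmonoid.subset_closure hzero
        smul_mem' := hsmul }
    have : Submodule.span 𝒜 (Set.range D) ≤ M := by
      rw [Submodule.span_le]
      rintro _ ⟨u, rfl⟩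
      exact AddSubmonoid.subset_closure ⟨1, u, (one_smul _ _).symm⟩
    have h2 : x ∈ M := this (by
      rw [KaehlerDifferential.span_range_derivation]; trivial)
    exact h2
  -- zero lemmas for B
  have hB0₁ : ∀ η, B 0 η = 0 := by
    intro η
    have h := hBadd₁ 0 0 η
    rw [add_zero] at h
    exact right_eq_add.mp h
  have hB0₂ : ∀ ω, B ω 0 = 0 := by
    intro ω
    have h := hBadd₂ ω 0 0
    rw [add_zero] at h
    exact right_eq_add.mp h
  -- the generator case
  have hgen : ∀ a u b v : 𝒜,
      sharp (B (a • D u) (b • D v)) = ⁅sharp (a • D u), sharp (b • D v)⁆ := by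
    intro a u b v
    rw [hBform]
    ext w
    have key : ∀ (c : 𝒜) (x y : 𝒜), sharp (c • D x) y = c * P x y := by
      intro c x y
      rw [map_smul]
      simp [hsharp, smul_eq_mul]
    simp only [map_add, Derivation.add_apply, key, Derivation.commutator_apply]
    rw [hleib u b ((P v) w), hleib v a ((P u) w), hjac u v w, hanti a v]
    ring
  intro ω η
  induction htop ω using AddSubmonoid.closure_induction with
  | mem x hx =>
    obtain ⟨a, u, rfl⟩ := hx
    induction htop η using AddSubmonoid.closure_induction with
    | mem y hy =>
      obtain ⟨b, v, rfl⟩ := hy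
      exact hgen a u b v
    | zero => simp [hB0₂]
    | add y z _ _ hy hz => rw [hBadd₂, map_add, hy, hz, map_add, lie_add]
  | zero => simp [hB0₁]
  | add x y _ _ hx hy => rw [hBadd₁, map_add, hx, hy, map_add, add_lie]
end
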